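/- arXiv:0807.0744 — 3 statements merged into one kernel-verified Lean document; each statement's English description precedes it below -/
import Mathlib

section
/- Let Q = ℝ^d with a continuous Finsler dissipation R₁ (each R₁(q,·) a norm), induced complete Finsler distance d, and E ∈ C¹([0,T] × ℝ^d; ℝ). Let (t̂,q̂) : [s₀,s₁] → [0,T] × ℝ^d be absolutely continuous with t̂ nondecreasing and t̂'(s) + |q̂'|(s) > 0 for a.e. s. Then (t̂,q̂) satisfies the parametrized-solution inequality (d/ds) E(t̂(s),q̂(s)) − ∂_t E(t̂(s),q̂(s)) t̂'(s) ≤ −M₀(t̂'(s), |q̂'|(s), |∂E|(t̂(s),q̂(s))) for a.e. s if and only if for a.e. s ∈ (s₀,s₁) both: (i) (d/ds) E(t̂(s),q̂(s)) − ∂_t E(t̂(s),q̂(s)) t̂'(s) = − |q̂'|(s) · |∂E|(t̂(s),q̂(s)); and (ii) t̂'(s) > 0 implies |∂E|(t̂(s),q̂(s)) ≤ 1, and |q̂'|(s) > 0 implies |∂E|(t̂(s),q̂(s)) ≥ 1. -/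
open MeasureTheory Filter Set Function
open scoped Topology ENNReal RealInnerProductSpace

noncomputable section

/-- `y` is absolutely continuous on `[a,b]` with (a.e.) derivative `y'`:
it is the integral of the integrable function `y'`. -/
structure IsACOn {W : Type*} [NormedAddCommGroup W] [NormedSpace ℝ W]
    (a b : ℝ) (y : ℝ → W) (y' : ℝ → W) : Prop where
  intg : IntervalIntegrable y' volume a b
  eq : ∀ t ∈ Set.Icc a b, y t = y a + ∫ s in a..t, y' s

/-- A continuous Finsler dissipation: `R1 q ·` is a norm for every `q`. -/
structure IsFinsler {V : Type*} [NormedAddCommGroup V] [NormedSpace ℝ V]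
    (R1 : V → V → ℝ) : Prop where
  cont : Continuous fun p : V × V => R1 p.1 p.2
  nonneg : ∀ q v, 0 ≤ R1 q v
  eq_zero_iff : ∀ q v, R1 q v = 0 ↔ v = 0
  smul : ∀ (q : V) (c : ℝ) (v : V), R1 q (c • v) = |c| * R1 q v
  triangle : ∀ q u v, R1 q (u + v) ≤ R1 q u + R1 q v

/-- The Finsler distance induced by the dissipation `R1`. -/
def finslerDist {V : Type*} [NormedAddCommGroup V] [NormedSpace ℝ V]
    (R1 : V → V → ℝ) (q0 q1 : V) : ℝ :=
  sInf {L | ∃ y y' : ℝ → V, IsACOn 0 1 y y' ∧ y 0 = q0 ∧ y 1 = q1 ∧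
    L = ∫ s in (0:ℝ)..1, R1 (y s) (y' s)}

/-- Completeness of the space w.r.t. a distance function `dF`. -/
def IsCompleteD {V : Type*} (dF : V → V → ℝ) : Prop :=
  ∀ u : ℕ → V, (∀ ε > 0, ∃ N, ∀ m ≥ N, ∀ n ≥ N, dF (u m) (u n) < ε) →
    ∃ x : V, Filter.Tendsto (fun k => dF (u k) x) Filter.atTop (𝓝 0)

/-- `E` is a `C¹` energy with partial time derivative `Et` and spatial gradient `DqE`. -/
structure IsC1Energy {V : Type*} [NormedAddCommGroup V] [InnerProductSpace ℝ V]
    [CompleteSpace V] (E Et : ℝ → V → ℝ) (DqE : ℝ → V → V) : Prop where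
  contE : Continuous fun p : ℝ × V => E p.1 p.2
  contEt : Continuous fun p : ℝ × V => Et p.1 p.2
  contDqE : Continuous fun p : ℝ × V => DqE p.1 p.2
  hasDerivT : ∀ t q, HasDerivAt (fun τ => E τ q) (Et t q) t
  hasGrad : ∀ t q, HasGradientAt (fun x => E t x) (DqE t q) q

/-- The local slope `|∂E|(t,q) = sup_{v ≠ 0} ⟨D_qE(t,q), v⟩ / R₁(q,v)`. -/
def localSlope {V : Type*} [NormedAddCommGroup V] [InnerProductSpace ℝ V]
    (R1 : V → V → ℝ) (DqE : ℝ → V → V) (t : ℝ) (q : V) : ℝ :=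
  sSup {r | ∃ v : V, v ≠ 0 ∧ r = (inner ℝ (DqE t q) v : ℝ) / R1 q v}

/-- The limit function `M₀` (with values in `EReal`). -/
def M0 (a v x : ℝ) : EReal :=
  if a = 0 then ((v + v * max (x - 1) 0 : ℝ) : EReal)
  else if x ≤ 1 then ((v : ℝ) : EReal) else ⊤

/-- The limit function `M₀` (with values in `ℝ≥0∞`). -/
def M0E (a v x : ℝ) : ℝ≥0∞ :=
  if a = 0 then ENNReal.ofReal (v + v * max (x - 1) 0)
  else if x ≤ 1 then ENNReal.ofReal v else ⊤

/-- The viscous functional `M_ε` (with values in `ℝ≥0∞`). -/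
def MepsE (ε a v x : ℝ) : ℝ≥0∞ :=
  if a = 0 then (if v = 0 then 0 else ⊤)
  else ENNReal.ofReal (v + ε / (2 * a) * v ^ 2 + a / (2 * ε) * (max (x - 1) 0) ^ 2)

/-- Convex subdifferential of a real-valued function. -/
def subdiff {V : Type*} [NormedAddCommGroup V] [InnerProductSpace ℝ V]
    (f : V → ℝ) (v : V) : Set V :=
  {w | ∀ u, f v + (inner ℝ w (u - v) : ℝ) ≤ f u}

/-- Convex subdifferential of an extended-real-valued function. -/
def subdiffE {V : Type*} [NormedAddCommGroup V] [InnerProductSpace ℝ V]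
    (f : V → EReal) (v : V) : Set V :=
  {w | ∀ u, f v + (((inner ℝ w (u - v) : ℝ) : ℝ) : EReal) ≤ f u}

/-- `R̂(q,v) = R₁(q,v)` if `R₁(q,v) ≤ 1`, `+∞` otherwise. -/
def Rhat {V : Type*} (R1 : V → V → ℝ) (q v : V) : EReal :=
  if R1 q v ≤ 1 then ((R1 q v : ℝ) : EReal) else ⊤

/-- A parametrized metric solution of the rate-independent system `(ℝ^d, d, E)`. -/
structure IsParamSol {V : Type*} [NormedAddCommGroup V] [InnerProductSpace ℝ V]
    [CompleteSpace V]
    (R1 : V → V → ℝ) (E Et : ℝ → V → ℝ) (DqE : ℝ → V → V) (T s₀ s₁ : ℝ)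
    (th th' : ℝ → ℝ) (qh qh' : ℝ → V) : Prop where
  acT : IsACOn s₀ s₁ th th'
  acQ : IsACOn s₀ s₁ qh qh'
  maps : ∀ s ∈ Set.Icc s₀ s₁, th s ∈ Set.Icc 0 T
  mono : MonotoneOn th (Set.Icc s₀ s₁)
  nondeg : ∀ᵐ s ∂volume, s ∈ Set.Ioo s₀ s₁ → 0 < th' s + R1 (qh s) (qh' s)
  evi : ∀ᵐ s ∂volume, s ∈ Set.Ioo s₀ s₁ →
    ((deriv (fun r => E (th r) (qh r)) s - Et (th s) (qh s) * th' s : ℝ) : EReal)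
      ≤ -(M0 (th' s) (R1 (qh s) (qh' s)) (localSlope R1 DqE (th s) (qh s)))

/-- A solution of the viscous `ψ_ε`-gradient system. -/
structure IsViscousSol {V : Type*} [NormedAddCommGroup V] [InnerProductSpace ℝ V]
    [CompleteSpace V]
    (R1 : V → V → ℝ) (E Et : ℝ → V → ℝ) (DqE : ℝ → V → V) (T ε : ℝ)
    (q q' : ℝ → V) : Prop where
  ac : IsACOn 0 T q q'
  evi : ∀ᵐ t ∂volume, t ∈ Set.Ioo 0 T →
    deriv (fun τ => E τ (q τ)) t ≤ Et t (q t)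
      - (R1 (q t) (q' t) + ε / 2 * (R1 (q t) (q' t)) ^ 2)
      - (max (localSlope R1 DqE t (q t) - 1) 0) ^ 2 / (2 * ε)

/-- Total variation of `q` on the set `I`, w.r.t. the distance function `dF`. -/
def varWith {Y : Type*} (dF : Y → Y → ℝ) (q : ℝ → Y) (I : Set ℝ) : ℝ≥0∞ :=
  ⨆ p : ℕ × {u : ℕ → ℝ // Monotone u ∧ ∀ i, u i ∈ I},
    ∑ i ∈ Finset.range p.1, ENNReal.ofReal (dF (q (p.2.1 i)) (q (p.2.1 (i + 1))))

/-- Left limit of a curve at `t`, with the convention `q(0⁻) = q(0)`. -/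
def llim {Y : Type*} [TopologicalSpace Y] (q : ℝ → Y) (t : ℝ) : Y :=
  if t ≤ 0 then q t else Function.leftLim q t

/-- Right limit of a curve at `t`, with the convention `q(T⁺) = q(T)`. -/
def rlim {Y : Type*} [TopologicalSpace Y] (T : ℝ) (q : ℝ → Y) (t : ℝ) : Y :=
  if T ≤ t then q t else Function.rightLim q t

/-- Continuity set of a curve `q : [0,T] → Y`. -/
def contSet {Y : Type*} [TopologicalSpace Y] (T : ℝ) (q : ℝ → Y) : Set ℝ :=
  {t | t ∈ Set.Icc 0 T ∧ llim q t = q t ∧ rlim T q t = q t}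

/-- Jump set of a curve `q : [0,T] → Y`. -/
def jumpSet {Y : Type*} [TopologicalSpace Y] (T : ℝ) (q : ℝ → Y) : Set ℝ :=
  Set.Icc 0 T \ contSet T q

/-- The (clamped) variation function `t ↦ Var(q, [0, min(t,T)])`, real-valued. -/
def vFun {Y : Type*} (dF : Y → Y → ℝ) (T : ℝ) (q : ℝ → Y) (t : ℝ) : ℝ :=
  (varWith dF q (Set.Icc 0 (min t T))).toReal

/-- `μ` is the Lebesgue–Stieltjes measure (distributional derivative) of the
variation function of `q` w.r.t. the distance `dF`. -/
def IsVarMeasure {Y : Type*} (dF : Y → Y → ℝ) (T : ℝ) (q : ℝ → Y)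
    (μ : Measure ℝ) : Prop :=
  ∀ a b : ℝ, a ≤ b → μ (Set.Ioc a b) =
    ENNReal.ofReal (Function.rightLim (vFun dF T q) b - Function.rightLim (vFun dF T q) a)

/-- Metric derivative of a curve in a (pseudo-)metric space. -/
def mderiv {Y : Type*} [PseudoMetricSpace Y] (y : ℝ → Y) (s : ℝ) : ℝ :=
  Filter.limsup (fun h : ℝ => dist (y (s + h)) (y s) / |h|) (𝓝[≠] (0 : ℝ))

/-- The slope distance `S_α(t; q₀, q₁)`. -/
def slopeDist {V : Type*} [NormedAddCommGroup V] [InnerProductSpace ℝ V]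
    (R1 : V → V → ℝ) (DqE : ℝ → V → V) (α t : ℝ) (q0 q1 : V) : ℝ :=
  sInf {r | ∃ y y' : ℝ → V, IsACOn 0 1 y y' ∧ y 0 = q0 ∧ y 1 = q1 ∧
    r = ∫ s in (0:ℝ)..1, max (localSlope R1 DqE t (y s)) α * R1 (y s) (y' s)}

/-- The dissipation functional `Σ₀(q, [t₀,t₁])`. -/
def Sigma0 {V : Type*} [NormedAddCommGroup V] [InnerProductSpace ℝ V]
    (R1 : V → V → ℝ) (DqE : ℝ → V → V) (T : ℝ) (q : ℝ → V) (μ : Measure ℝ)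
    (t₀ t₁ : ℝ) : ℝ≥0∞ :=
  (∫⁻ r in Set.Ioo t₀ t₁, ENNReal.ofReal (localSlope R1 DqE r (q r))
      ∂(μ.restrict (contSet T q)))
  + ENNReal.ofReal (slopeDist R1 DqE 0 t₀ (q t₀) (rlim T q t₀))
  + ENNReal.ofReal (slopeDist R1 DqE 0 t₁ (llim q t₁) (q t₁))
  + ∑' t : ↥(jumpSet T q ∩ Set.Ioo t₀ t₁),
      (ENNReal.ofReal (slopeDist R1 DqE 0 t (llim q t) (q t))
       + ENNReal.ofReal (slopeDist R1 DqE 0 t (q t) (rlim T q t)))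

/-- The functional `Γ(q,[t₀,t₁])`. -/
def GammaFn {V : Type*} [NormedAddCommGroup V] [InnerProductSpace ℝ V]
    (R1 : V → V → ℝ) (DqE : ℝ → V → V) (E : ℝ → V → ℝ) (T : ℝ) (q : ℝ → V)
    (μ : Measure ℝ) (t₀ t₁ : ℝ) : ℝ≥0∞ :=
  (∫⁻ r in Set.Ioo t₀ t₁, ENNReal.ofReal (localSlope R1 DqE r (q r))
      ∂(μ.restrict (contSet T q)))
  + ENNReal.ofReal (|E t₀ (q t₀) - E t₀ (rlim T q t₀)|)
  + ENNReal.ofReal (|E t₁ (llim q t₁) - E t₁ (q t₁)|)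
  + ∑' t : ↥(jumpSet T q ∩ Set.Ioo t₀ t₁),
      (ENNReal.ofReal (|E (↑t) (q t) - E (↑t) (rlim T q t)|)
       + ENNReal.ofReal (|E (↑t) (llim q t) - E (↑t) (q t)|))

/-- The dissipation functional `Σ₁(q, [t₀,t₁])`. -/
def Sigma1 {V : Type*} [NormedAddCommGroup V] [InnerProductSpace ℝ V]
    (R1 : V → V → ℝ) (DqE : ℝ → V → V) (T : ℝ) (q : ℝ → V) (μ : Measure ℝ)
    (t₀ t₁ : ℝ) : ℝ≥0∞ :=
  (∫⁻ r in Set.Ioo t₀ t₁, ENNReal.ofReal (max (localSlope R1 DqE r (q r)) 1)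
      ∂(μ.restrict (contSet T q)))
  + (∫⁻ r in Set.Ioo t₀ t₁, ENNReal.ofReal (localSlope R1 DqE r (q r) - 1))
  + ENNReal.ofReal (slopeDist R1 DqE 1 t₀ (q t₀) (rlim T q t₀))
  + ENNReal.ofReal (slopeDist R1 DqE 1 t₁ (llim q t₁) (q t₁))
  + ∑' t : ↥(jumpSet T q ∩ Set.Ioo t₀ t₁),
      (ENNReal.ofReal (slopeDist R1 DqE 1 t (llim q t) (q t))
       + ENNReal.ofReal (slopeDist R1 DqE 1 t (q t) (rlim T q t)))

/-- A BV solution of the rate-independent system `(ℝ^d, d, E)`, where `μ` is the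
variation measure of `q`. -/
structure IsBVSol {V : Type*} [NormedAddCommGroup V] [InnerProductSpace ℝ V]
    (R1 : V → V → ℝ) (E Et : ℝ → V → ℝ) (DqE : ℝ → V → V) (T : ℝ) (q : ℝ → V)
    (μ : Measure ℝ) : Prop where
  en : ∀ t₀ t₁ : ℝ, 0 ≤ t₀ → t₀ < t₁ → t₁ ≤ T →
    ((E t₁ (q t₁) - E t₀ (q t₀) - ∫ t in t₀..t₁, Et t (q t) : ℝ) : EReal)
      ≤ -((Sigma0 R1 DqE T q μ t₀ t₁ : ℝ≥0∞) : EReal)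
  locstab : ∀ t ∈ Set.Icc 0 T \ jumpSet T q, localSlope R1 DqE t (q t) ≤ 1
  suppstab : ∀ t : ℝ, (∀ ε > 0, μ (Set.Ioo (t - ε) (t + ε)) ≠ 0) →
    1 ≤ localSlope R1 DqE t (q t)
  jump : ∀ t ∈ jumpSet T q, ∃ (y y' : ℝ → V) (θt : ℝ),
    IsACOn 0 1 y y' ∧ y 0 = llim q t ∧ y 1 = rlim T q t ∧ θt ∈ Set.Icc (0:ℝ) 1 ∧
    y θt = q t ∧ (∀ θ ∈ Set.Icc (0:ℝ) 1, 1 ≤ localSlope R1 DqE t (y θ)) ∧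
    E t (rlim T q t) - E t (llim q t)
      = -∫ θ in (0:ℝ)..1, localSlope R1 DqE t (y θ) * R1 (y θ) (y' θ)

/-- An energetic solution of the rate-independent system `(ℝ^d, d, E)`. -/
def IsEnergeticSol {V : Type*} [NormedAddCommGroup V] [InnerProductSpace ℝ V]
    (R1 : V → V → ℝ) (E Et : ℝ → V → ℝ) (T : ℝ) (q : ℝ → V) : Prop :=
  ∀ t ∈ Set.Icc (0:ℝ) T,
    (∀ p, E t (q t) ≤ E t p + finslerDist R1 (q t) p) ∧
    E t (q t) + (varWith (finslerDist R1) q (Set.Icc 0 t)).toReal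
      = E 0 (q 0) + ∫ s in (0:ℝ)..t, Et s (q s)

/-- The global slope of `E(t,·)` at `q`, w.r.t. the distance `dF`. -/
def gSlopeD {V : Type*} (dF : V → V → ℝ) (E : ℝ → V → ℝ) (t : ℝ) (q : V) : ℝ≥0∞ :=
  ⨆ (v : V) (_ : v ≠ q), ENNReal.ofReal (max (E t q - E t v) 0 / dF q v)

end

variable {d : ℕ}

section Aux

lemma ae_hasDerivAt_of_isACOn {W : Type*} [NormedAddCommGroup W] [NormedSpace ℝ W]
    [CompleteSpace W] {a b : ℝ} {y y' : ℝ → W} (hab : a ≤ b) (h : IsACOn a b y y') :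
    ∀ᵐ s ∂volume, s ∈ Set.Ioo a b → HasDerivAt y (y' s) s := by
  set g : ℝ → W := (Set.Ioo a b).indicator y' with hg_def
  have hgint : Integrable g := by
    rw [hg_def, integrable_indicator_iff measurableSet_Ioo]
    exact (h.intg.1).mono_set Set.Ioo_subset_Ioc_self
  filter_upwards [IsUnifLocDoublingMeasure.ae_tendsto_average (volume : Measure ℝ)
    hgint.locallyIntegrable 1] with s hs hsI
  have hgs : g s = y' s := Set.indicator_of_mem hsI _
  -- the average along shrinking balls tends to y' s
  have hδ : Tendsto (fun t : ℝ => |t - s| / 2) (𝓝[≠] s) (𝓝[>] 0) := by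
    apply tendsto_nhdsWithin_of_tendsto_nhds_of_eventually_within
    · have : Tendsto (fun t : ℝ => |t - s| / 2) (𝓝 s) (𝓝 (|s - s| / 2)) :=
        (((continuous_id.sub continuous_const).abs.div_const 2).tendsto s)
      simpa using this.mono_left nhdsWithin_le_nhds
    · filter_upwards [self_mem_nhdsWithin] with t ht
      have : t - s ≠ 0 := sub_ne_zero.2 ht
      have := abs_pos.2 this
      simp only [Set.mem_Ioi]
      linarith
  have hmem : ∀ᶠ t in 𝓝[≠] s, s ∈ Metric.closedBall ((s + t) / 2) (1 * (|t - s| / 2)) := by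
    filter_upwards with t
    simp only [Metric.mem_closedBall, Real.dist_eq, one_mul]
    have h1 : s - (s + t) / 2 = -((t - s) / 2) := by ring
    rw [h1, abs_neg, abs_div, abs_two]
  have havg := hs (fun t : ℝ => (s + t) / 2) (fun t : ℝ => |t - s| / 2) hδ hmem
  rw [hgs] at havg
  rw [hasDerivAt_iff_tendsto_slope]
  refine havg.congr' ?_
  filter_upwards [eventually_nhdsWithin_of_eventually_nhds (Ioo_mem_nhds hsI.1 hsI.2),
    self_mem_nhdsWithin] with t htI (htne : t ≠ s)
  -- identify the ball with uIcc s t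
  have hball : Metric.closedBall ((s + t) / 2) (|t - s| / 2) = Set.uIcc s t := by
    rw [Real.closedBall_eq_Icc, Set.uIcc]
    rcases le_total s t with hst | hst
    · rw [abs_of_nonneg (by linarith), min_eq_left hst, max_eq_right hst]
      congr 1 <;> ring
    · rw [abs_of_nonpos (by linarith), min_eq_right hst, max_eq_left hst]
      congr 1 <;> ring
  have hvol : (volume (Metric.closedBall ((s + t) / 2) (|t - s| / 2))).toReal = |t - s| := by
    rw [Real.volume_closedBall, ENNReal.toReal_ofReal (by positivity)]
    ring
  have hyint : ∀ u v : ℝ, u ∈ Set.Icc a b → v ∈ Set.Icc a b →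
      IntervalIntegrable y' volume u v := by
    intro u v hu hv
    refine h.intg.mono_set ?_
    rw [Set.uIcc_of_le hab]
    exact Set.uIcc_subset_Icc hu hv
  have hsab : s ∈ Set.Icc a b := ⟨hsI.1.le, hsI.2.le⟩
  have htab : t ∈ Set.Icc a b := ⟨htI.1.le, htI.2.le⟩
  have hyst : y t - y s = ∫ u in s..t, y' u := by
    rw [h.eq t htab, h.eq s hsab, add_sub_add_left_eq_sub,
      intervalIntegral.integral_interval_sub_left
      (hyint a t (Set.left_mem_Icc.2 hab) htab) (hyint a s (Set.left_mem_Icc.2 hab) hsab)]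
  have hcong : (∫ u in s..t, y' u) = ∫ u in s..t, g u := by
    apply intervalIntegral.integral_congr
    intro u hu
    have hu2 : u ∈ Set.Ioo a b := by
      rcases Set.mem_uIcc.1 hu with ⟨h1, h2⟩ | ⟨h1, h2⟩
      · exact ⟨lt_of_lt_of_le hsI.1 h1, lt_of_le_of_lt h2 htI.2⟩
      · exact ⟨lt_of_lt_of_le htI.1 h1, lt_of_le_of_lt h2 hsI.2⟩
    exact (Set.indicator_of_mem hu2 _).symm
  rw [setAverage_eq, measureReal_def, hvol, hball]
  show _ = slope y s t
  rw [slope_def_module, hyst, hcong]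
  rcases lt_or_gt_of_ne htne with hst | hst
  · rw [Set.uIcc_of_ge hst.le, abs_of_neg (sub_neg.2 hst),
      MeasureTheory.integral_Icc_eq_integral_Ioc, intervalIntegral.integral_symm t s,
      intervalIntegral.integral_of_le hst.le, smul_neg, ← neg_smul, ← neg_inv]
  · rw [Set.uIcc_of_le hst.le, abs_of_pos (sub_pos.2 hst),
      MeasureTheory.integral_Icc_eq_integral_Ioc, intervalIntegral.integral_of_le hst.le]

lemma chain_rule {V : Type*} [NormedAddCommGroup V] [InnerProductSpace ℝ V]
    [CompleteSpace V] {E Et : ℝ → V → ℝ} {DqE : ℝ → V → V}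
    (hE : IsC1Energy E Et DqE) {th : ℝ → ℝ} {qh : ℝ → V} {s A : ℝ} {B : V}
    (ht : HasDerivAt th A s) (hq : HasDerivAt qh B s) :
    HasDerivAt (fun r => E (th r) (qh r))
      (Et (th s) (qh s) * A + ⟪DqE (th s) (qh s), B⟫) s := by
  set t := th s
  set q := qh s
  set G := DqE t q
  set L : ℝ × V →L[ℝ] ℝ :=
    Et t q • (ContinuousLinearMap.fst ℝ ℝ V) +
      (InnerProductSpace.toDual ℝ V G : V →L[ℝ] ℝ).comp
        (ContinuousLinearMap.snd ℝ ℝ V) with hL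
  have hLapp : ∀ p : ℝ × V, L p = Et t q * p.1 + ⟪G, p.2⟫ := by
    intro p
    simp [hL, InnerProductSpace.toDual_apply_apply]
  have hF : HasFDerivAt (fun p : ℝ × V => E p.1 p.2) L (t, q) := by
    rw [hasFDerivAt_iff_isLittleO_nhds_zero]
    have hsplit : (fun h : ℝ × V => E (t + h.1) (q + h.2) - E t q - L h)
        = (fun h : ℝ × V => (E (t + h.1) (q + h.2) - E t (q + h.2) - Et t q * h.1)
            + (E t (q + h.2) - E t q - ⟪G, h.2⟫)) := by
      funext h
      rw [hLapp]
      ring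
    have : (fun h : ℝ × V => E ((t, q) + h).1 ((t, q) + h).2 - E (t, q).1 (t, q).2 - L h)
        = (fun h : ℝ × V => E (t + h.1) (q + h.2) - E t q - L h) := by
      funext h; rfl
    rw [this, hsplit]
    have hB : (fun h : ℝ × V => E t (q + h.2) - E t q - ⟪G, h.2⟫) =o[𝓝 0]
        (fun h : ℝ × V => h) := by
      have hg := (hE.hasGrad t q).hasFDerivAt
      rw [hasFDerivAt_iff_isLittleO_nhds_zero] at hg
      have hsnd : Tendsto (fun h : ℝ × V => h.2) (𝓝 0) (𝓝 0) :=
        continuous_snd.tendsto' 0 0 rfl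
      have := (hg.comp_tendsto hsnd)
      simp only [Function.comp_def, InnerProductSpace.toDual_apply_apply] at this
      exact this.trans_isBigO
        (Asymptotics.isBigO_of_le _ (fun h => by simpa using norm_snd_le h))
    refine Asymptotics.IsLittleO.add ?_ hB
    rw [Asymptotics.isLittleO_iff]
    intro ε hε
    obtain ⟨δ, hδ, hcont⟩ := Metric.continuousAt_iff.1 (hE.contEt.continuousAt
      (x := (t, q))) ε hε
    have hev : ∀ᶠ h : ℝ × V in 𝓝 0, ‖h‖ < δ := by
      have := Metric.ball_mem_nhds (0 : ℝ × V) hδ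
      filter_upwards [this] with h hh
      simpa [dist_eq_norm] using hh
    filter_upwards [hev] with h hh
    -- MVT on τ ↦ E τ (q + h.2) - Et t q * τ over uIcc t (t + h.1)
    have hbound : ∀ τ ∈ Set.uIcc t (t + h.1),
        ‖Et τ (q + h.2) - Et t q‖ ≤ ε := by
      intro τ hτ
      have hτt : |τ - t| ≤ |h.1| := by
        rcases Set.mem_uIcc.1 hτ with ⟨h1, h2⟩ | ⟨h1, h2⟩ <;> rw [abs_le] <;>
          cases abs_cases h.1 <;> constructor <;> linarith
      have h1 : ‖h.1‖ ≤ ‖h‖ := norm_fst_le h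
      have h2 : ‖h.2‖ ≤ ‖h‖ := norm_snd_le h
      have : dist (τ, q + h.2) (t, q) < δ := by
        rw [Prod.dist_eq]
        simp only [Real.dist_eq, dist_self_add_left]
        rw [Real.norm_eq_abs] at h1
        exact max_lt (lt_of_le_of_lt (hτt.trans h1) hh) (lt_of_le_of_lt h2 hh)
      have := hcont this
      rw [Real.dist_eq] at this
      exact le_of_lt (by simpa [Real.norm_eq_abs] using this)
    have hderiv : ∀ τ ∈ Set.uIcc t (t + h.1),
        HasDerivWithinAt (fun τ => E τ (q + h.2) - Et t q * τ)
          (Et τ (q + h.2) - Et t q) (Set.uIcc t (t + h.1)) τ := by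
      intro τ _
      have hid : HasDerivAt (fun τ : ℝ => Et t q * τ) (Et t q) τ := by
        simpa using (hasDerivAt_id τ).const_mul (Et t q)
      exact ((hE.hasDerivT τ (q + h.2)).sub hid).hasDerivWithinAt
    have hmvt := Convex.norm_image_sub_le_of_norm_hasDerivWithin_le hderiv hbound
      (convex_uIcc _ _) (Set.left_mem_uIcc) (Set.right_mem_uIcc)
    have heq : E (t + h.1) (q + h.2) - Et t q * (t + h.1) - (E t (q + h.2) - Et t q * t)
        = E (t + h.1) (q + h.2) - E t (q + h.2) - Et t q * h.1 := by ring
    rw [heq] at hmvt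
    have h1 : ‖h.1‖ ≤ ‖h‖ := norm_fst_le h
    calc ‖E (t + h.1) (q + h.2) - E t (q + h.2) - Et t q * h.1‖
        ≤ ε * ‖t + h.1 - t‖ := hmvt
      _ = ε * ‖h.1‖ := by rw [add_sub_cancel_left]
      _ ≤ ε * ‖h‖ := by nlinarith [norm_nonneg h, hε.le]
  have hγ : HasDerivAt (fun r => (th r, qh r)) (A, B) s := ht.prodMk hq
  have := hF.comp_hasDerivAt s hγ
  simpa [Function.comp_def, hLapp] using this

-- derivative nonneg for monotone
lemma deriv_nonneg_of_monotoneOn {a b s A : ℝ} {f : ℝ → ℝ}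
    (hmono : MonotoneOn f (Set.Icc a b)) (hsI : s ∈ Set.Ioo a b)
    (hd : HasDerivAt f A s) : 0 ≤ A := by
  have h1 : Tendsto (slope f s) (𝓝[>] s) (𝓝 A) :=
    (hasDerivAt_iff_tendsto_slope.1 hd).mono_left
      (nhdsWithin_mono s (fun x hx => ne_of_gt hx))
  refine ge_of_tendsto h1 ?_
  filter_upwards [Ioo_mem_nhdsGT_of_mem (⟨le_refl s, hsI.2⟩ : s ∈ Set.Ico s b)] with t ht
  rw [slope_def_field]
  have hfle : f s ≤ f t := hmono ⟨hsI.1.le, hsI.2.le⟩ ⟨hsI.1.le.trans ht.1.le, ht.2.le⟩ ht.1.le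
  exact div_nonneg (sub_nonneg.2 hfle) (sub_nonneg.2 ht.1.le)

lemma R1_lower {d : ℕ} {R1 : EuclideanSpace ℝ (Fin d) → EuclideanSpace ℝ (Fin d) → ℝ}
    (hR : IsFinsler R1) (q : EuclideanSpace ℝ (Fin d)) :
    ∃ c > 0, ∀ v, c * ‖v‖ ≤ R1 q v := by
  by_cases hvv : ∃ v : EuclideanSpace ℝ (Fin d), v ≠ 0
  · obtain ⟨v₀, hv₀⟩ := hvv
    have hsph : (Metric.sphere (0 : EuclideanSpace ℝ (Fin d)) 1).Nonempty := by
      refine ⟨‖v₀‖⁻¹ • v₀, ?_⟩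
      simp [norm_smul, abs_of_nonneg, inv_mul_cancel₀ (norm_ne_zero_iff.2 hv₀)]
    have hcont : ContinuousOn (fun v => R1 q v) (Metric.sphere 0 1) :=
      (hR.cont.comp (Continuous.prodMk_right q)).continuousOn
    obtain ⟨u₀, hu₀, hmin⟩ := (isCompact_sphere (0 : EuclideanSpace ℝ (Fin d)) 1).exists_isMinOn
      hsph hcont
    have hu₀ne : u₀ ≠ 0 := by
      intro hc
      rw [mem_sphere_zero_iff_norm, hc, norm_zero] at hu₀
      norm_num at hu₀
    have hc0 : 0 < R1 q u₀ :=
      lt_of_le_of_ne (hR.nonneg q u₀) (fun hc => hu₀ne ((hR.eq_zero_iff q u₀).1 hc.symm))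
    refine ⟨R1 q u₀, hc0, fun v => ?_⟩
    rcases eq_or_ne v 0 with rfl | hv
    · simp [(hR.eq_zero_iff q 0).2 rfl]
    · have hu : ‖v‖⁻¹ • v ∈ Metric.sphere (0 : EuclideanSpace ℝ (Fin d)) 1 := by
        simp [norm_smul, abs_of_nonneg, inv_mul_cancel₀ (norm_ne_zero_iff.2 hv)]
      have h1 : R1 q u₀ ≤ R1 q (‖v‖⁻¹ • v) := hmin hu
      have h2 : R1 q v = ‖v‖ * R1 q (‖v‖⁻¹ • v) := by
        have : v = ‖v‖ • (‖v‖⁻¹ • v) := by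
          rw [smul_smul, mul_inv_cancel₀ (norm_ne_zero_iff.2 hv), one_smul]
        nth_rw 1 [this]
        rw [hR.smul, abs_of_nonneg (norm_nonneg v)]
      rw [h2]
      have := mul_le_mul_of_nonneg_left h1 (norm_nonneg v)
      linarith [mul_comm (R1 q u₀) ‖v‖]
  · push_neg at hvv
    refine ⟨1, one_pos, fun v => ?_⟩
    rw [hvv v]
    simp [(hR.eq_zero_iff q 0).2 rfl]

lemma slope_bddAbove {d : ℕ} {R1 : EuclideanSpace ℝ (Fin d) → EuclideanSpace ℝ (Fin d) → ℝ}
    (hR : IsFinsler R1) (G q : EuclideanSpace ℝ (Fin d)) :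
    BddAbove {r | ∃ v : EuclideanSpace ℝ (Fin d), v ≠ 0 ∧ r = (⟪G, v⟫ : ℝ) / R1 q v} := by
  obtain ⟨c, hc, hcle⟩ := R1_lower hR q
  refine ⟨‖G‖ / c, fun r hr => ?_⟩
  obtain ⟨v, hv, rfl⟩ := hr
  rcases le_or_gt (⟪G, v⟫ : ℝ) 0 with h0 | h0
  · exact le_trans (div_nonpos_of_nonpos_of_nonneg h0 (hR.nonneg q v)) (by positivity)
  · have hnv : (0:ℝ) < ‖v‖ := norm_pos_iff.2 hv
    have h1 : (⟪G, v⟫ : ℝ) / R1 q v ≤ (‖G‖ * ‖v‖) / (c * ‖v‖) := by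
      apply div_le_div₀ (by positivity) (real_inner_le_norm G v) (by positivity) (hcle v)
    rwa [mul_div_mul_right _ _ (ne_of_gt hnv)] at h1

lemma key_slope_ineq {d : ℕ} {R1 : EuclideanSpace ℝ (Fin d) → EuclideanSpace ℝ (Fin d) → ℝ}
    (hR : IsFinsler R1) {DqE : ℝ → EuclideanSpace ℝ (Fin d) → EuclideanSpace ℝ (Fin d)}
    (t : ℝ) (q v : EuclideanSpace ℝ (Fin d)) :
    -(⟪DqE t q, v⟫ : ℝ) ≤ R1 q v * localSlope R1 DqE t q := by
  rcases eq_or_ne v 0 with rfl | hv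
  · simp [(hR.eq_zero_iff q 0).2 rfl]
  · have hν : 0 < R1 q v :=
      lt_of_le_of_ne (hR.nonneg q v) (fun hc => hv ((hR.eq_zero_iff q v).1 hc.symm))
    have hmem : (⟪DqE t q, -v⟫ : ℝ) / R1 q (-v) ∈
        {r | ∃ w : EuclideanSpace ℝ (Fin d), w ≠ 0 ∧ r = (⟪DqE t q, w⟫ : ℝ) / R1 q w} :=
      ⟨-v, neg_ne_zero.2 hv, rfl⟩
    have hle := le_csSup (slope_bddAbove hR (DqE t q) q) hmem
    have hRneg : R1 q (-v) = R1 q v := by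
      have : (-v : EuclideanSpace ℝ (Fin d)) = (-1 : ℝ) • v := by simp
      rw [this, hR.smul]; simp
    rw [hRneg, inner_neg_right] at hle
    rw [mul_comm]
    exact (div_le_iff₀ hν).1 hle

end Aux

theorem statement5 (T s₀ s₁ : ℝ) (hT : 0 < T) (hs : s₀ < s₁)
    (R1 : EuclideanSpace ℝ (Fin d) → EuclideanSpace ℝ (Fin d) → ℝ)
    (hR : IsFinsler R1) (hcomp : IsCompleteD (finslerDist R1))
    (E Et : ℝ → EuclideanSpace ℝ (Fin d) → ℝ)
    (DqE : ℝ → EuclideanSpace ℝ (Fin d) → EuclideanSpace ℝ (Fin d))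
    (hE : IsC1Energy E Et DqE)
    (th th' : ℝ → ℝ) (qh qh' : ℝ → EuclideanSpace ℝ (Fin d))
    (hACt : IsACOn s₀ s₁ th th') (hACq : IsACOn s₀ s₁ qh qh')
    (hmap : ∀ s ∈ Set.Icc s₀ s₁, th s ∈ Set.Icc 0 T)
    (hmono : MonotoneOn th (Set.Icc s₀ s₁))
    (hnd : ∀ᵐ s ∂volume, s ∈ Set.Ioo s₀ s₁ → 0 < th' s + R1 (qh s) (qh' s)) :
    (∀ᵐ s ∂volume, s ∈ Set.Ioo s₀ s₁ →
        ((deriv (fun r => E (th r) (qh r)) s - Et (th s) (qh s) * th' s : ℝ) : EReal)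
          ≤ -(M0 (th' s) (R1 (qh s) (qh' s)) (localSlope R1 DqE (th s) (qh s))))
    ↔ (∀ᵐ s ∂volume, s ∈ Set.Ioo s₀ s₁ →
        (deriv (fun r => E (th r) (qh r)) s - Et (th s) (qh s) * th' s
            = -(R1 (qh s) (qh' s) * localSlope R1 DqE (th s) (qh s)) ∧
         (0 < th' s → localSlope R1 DqE (th s) (qh s) ≤ 1) ∧
         (0 < R1 (qh s) (qh' s) → 1 ≤ localSlope R1 DqE (th s) (qh s)))) := by
  have hAt := ae_hasDerivAt_of_isACOn hs.le hACt
  have hAq := ae_hasDerivAt_of_isACOn hs.le hACq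
  constructor
  · intro hEVI
    filter_upwards [hEVI, hAt, hAq, hnd] with s h1 h2 h3 h4
    intro hsI
    specialize h1 hsI; specialize h2 hsI; specialize h3 hsI; specialize h4 hsI
    have hα0 : 0 ≤ th' s := deriv_nonneg_of_monotoneOn hmono hsI h2
    have hD : deriv (fun r => E (th r) (qh r)) s
        = Et (th s) (qh s) * th' s + ⟪DqE (th s) (qh s), qh' s⟫ :=
      (chain_rule hE h2 h3).deriv
    have hK := key_slope_ineq hR (DqE := DqE) (th s) (qh s) (qh' s)
    set ν := R1 (qh s) (qh' s) with hν_def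
    set ξ := localSlope R1 DqE (th s) (qh s) with hξ_def
    set I := deriv (fun r => E (th r) (qh r)) s - Et (th s) (qh s) * th' s with hI_def
    have hI : I = ⟪DqE (th s) (qh s), qh' s⟫ := by rw [hI_def, hD]; ring
    have hK' : -(ν * ξ) ≤ I := by rw [hI]; linarith
    have hν0 : 0 ≤ ν := hR.nonneg _ _
    rw [M0] at h1
    by_cases hα : th' s = 0
    · rw [if_pos hα, ← EReal.coe_neg, EReal.coe_le_coe_iff] at h1
      have hν : 0 < ν := by rw [hα] at h4; linarith
      rcases le_or_gt ξ 1 with hξ | hξ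
      · rw [max_eq_right (by linarith)] at h1
        have hξge : 1 ≤ ξ := by nlinarith
        have hξ1 : ξ = 1 := le_antisymm hξ hξge
        refine ⟨?_, fun h0 => absurd hα h0.ne', fun _ => hξge⟩
        rw [hξ1, mul_one]
        rw [hξ1, mul_one] at hK'
        exact le_antisymm (by linarith) hK'
      · rw [max_eq_left (by linarith)] at h1
        have hring : ν + ν * max (ξ - 1) 0 = ν * ξ := by
          rw [max_eq_left (by linarith)]; ring
        refine ⟨?_, fun h0 => absurd hα h0.ne', fun _ => hξ.le⟩
        exact le_antisymm (by linarith [show ν + ν * (ξ - 1) = ν * ξ from by ring]) hK'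
    · rw [if_neg hα] at h1
      by_cases hξ : ξ ≤ 1
      · rw [if_pos hξ, ← EReal.coe_neg, EReal.coe_le_coe_iff] at h1
        have h5 : ν * ξ ≤ ν := by nlinarith
        refine ⟨le_antisymm (by linarith) hK', fun _ => hξ, fun hν => by nlinarith⟩
      · rw [if_neg hξ] at h1
        simp at h1
  · intro hcond
    filter_upwards [hcond, hAt, hAq, hnd] with s h1 h2 h3 h4
    intro hsI
    specialize h1 hsI; specialize h2 hsI; specialize h3 hsI; specialize h4 hsI
    obtain ⟨heq, hc2, hc3⟩ := h1
    have hα0 : 0 ≤ th' s := deriv_nonneg_of_monotoneOn hmono hsI h2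
    set ν := R1 (qh s) (qh' s) with hν_def
    set ξ := localSlope R1 DqE (th s) (qh s) with hξ_def
    have hν0 : 0 ≤ ν := hR.nonneg _ _
    rw [M0]
    by_cases hα : th' s = 0
    · rw [if_pos hα, ← EReal.coe_neg, EReal.coe_le_coe_iff]
      have hν : 0 < ν := by rw [hα] at h4; linarith
      have hξ : 1 ≤ ξ := hc3 hν
      rw [max_eq_left (by linarith)]
      nlinarith
    · have hαpos : 0 < th' s := lt_of_le_of_ne hα0 (Ne.symm hα)
      have hξ : ξ ≤ 1 := hc2 hαpos
      rw [if_neg hα, if_pos hξ, ← EReal.coe_neg, EReal.coe_le_coe_iff]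
      rcases eq_or_lt_of_le hν0 with hν | hν
      · rw [heq, ← hν]; simp
      · have hξge : 1 ≤ ξ := hc3 hν
        nlinarith
end

section
/- Let Q = ℝ^d with a continuous Finsler dissipation R₁ (each R₁(q,·) a norm), induced complete Finsler distance d, and E ∈ C¹([0,T] × ℝ^d; ℝ). An absolutely continuous curve (t̂,q̂) : [s₀,s₁] → [0,T] × ℝ^d is a parametrized metric solution of (ℝ^d,d,E) if and only if there exists λ : (s₀,s₁) → [1,∞) such that for a.e. s ∈ (s₀,s₁): 0 ∈ λ(s) ∂_v R₁(q̂(s), q̂'(s)) + D_qE(t̂(s),q̂(s)), t̂'(s) ≥ 0, λ(s) ≥ 1, (λ(s) − 1) t̂'(s) = 0, and t̂'(s) + R₁(q̂(s), q̂'(s)) > 0, where ∂_v R₁(q,·) denotes the convex subdifferential of the norm v ↦ R₁(q,v). -/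
open MeasureTheory Filter Set Function
open scoped Topology ENNReal RealInnerProductSpace

section AuxLemmas

open MeasureTheory Filter Set Function
open scoped Topology ENNReal RealInnerProductSpace

theorem aeFTC {W : Type*} [NormedAddCommGroup W] [NormedSpace ℝ W] [CompleteSpace W]
    (a : ℝ) (g : ℝ → W) (hg : MeasureTheory.Integrable g) :
    ∀ᵐ s ∂volume, HasDerivAt (fun t => ∫ u in a..t, g u) (g s) s := by
  have hloc : LocallyIntegrable g volume := hg.locallyIntegrable
  have hae := (IsUnifLocDoublingMeasure.vitaliFamily (volume : Measure ℝ) 1).ae_tendsto_average hloc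
  filter_upwards [hae] with s hs
  have hii : ∀ c d : ℝ, IntervalIntegrable g volume c d := fun c d => hg.intervalIntegrable
  have hsub : ∀ t : ℝ, (∫ u in a..t, g u) - (∫ u in a..s, g u) = ∫ u in s..t, g u :=
    fun t => intervalIntegral.integral_interval_sub_left (hii a t) (hii a s)
  rw [hasDerivAt_iff_tendsto_slope, ← Set.Iio_union_Ioi, nhdsWithin_union, tendsto_sup]
  constructor
  · have h2 := hs.comp (Real.tendsto_Icc_vitaliFamily_left s)
    refine h2.congr' ?_
    filter_upwards [self_mem_nhdsWithin] with t (ht : t < s)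
    show ⨍ y in Set.Icc t s, g y = slope (fun t => ∫ u in a..t, g u) s t
    rw [slope, vsub_eq_sub, hsub, setAverage_eq, Real.volume_real_Icc_of_le (by linarith)]
    have h3 : (∫ u in s..t, g u) = -∫ x in Set.Icc t s, g x := by
      rw [intervalIntegral.integral_symm t s, intervalIntegral.integral_of_le ht.le,
        MeasureTheory.integral_Icc_eq_integral_Ioc]
    rw [h3, smul_neg, ← neg_smul, neg_inv, neg_sub]
  · have h2 := hs.comp (Real.tendsto_Icc_vitaliFamily_right s)
    refine h2.congr' ?_
    filter_upwards [self_mem_nhdsWithin] with t (ht : s < t)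
    show ⨍ y in Set.Icc s t, g y = slope (fun t => ∫ u in a..t, g u) s t
    rw [slope, vsub_eq_sub, hsub, setAverage_eq, Real.volume_real_Icc_of_le (by linarith),
      MeasureTheory.integral_Icc_eq_integral_Ioc,
      ← intervalIntegral.integral_of_le ht.le]

theorem IsACOn.ae_hasDerivAt {W : Type*} [NormedAddCommGroup W] [NormedSpace ℝ W]
    [CompleteSpace W] {a b : ℝ} (hab : a ≤ b) {y y' : ℝ → W} (h : IsACOn a b y y') :
    ∀ᵐ s ∂volume, s ∈ Set.Ioo a b → HasDerivAt y (y' s) s := by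
  set g := (Set.Icc a b).indicator y' with hgdef
  have hio : IntegrableOn y' (Set.Icc a b) volume := by
    rw [integrableOn_Icc_iff_integrableOn_Ioc]
    exact (intervalIntegrable_iff_integrableOn_Ioc_of_le hab).1 h.intg
  have hg : Integrable g volume := hio.integrable_indicator measurableSet_Icc
  filter_upwards [aeFTC a g hg] with s hs hmem
  have hgy : g s = y' s := Set.indicator_of_mem (Set.mem_Icc_of_Ioo hmem) y'
  have hyeq : ∀ t ∈ Set.Icc a b, y t = y a + ∫ u in a..t, g u := by
    intro t ht
    rw [h.eq t ht]
    congr 1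
    refine intervalIntegral.integral_congr fun u hu => ?_
    rw [Set.uIcc_of_le ht.1] at hu
    exact (Set.indicator_of_mem (show u ∈ Set.Icc a b from ⟨hu.1, hu.2.trans ht.2⟩) y').symm
  have hF : HasDerivAt (fun t => y a + ∫ u in a..t, g u) (y' s) s := by
    rw [← hgy]; exact hs.const_add (y a)
  refine hF.congr_of_eventuallyEq ?_
  filter_upwards [isOpen_Ioo.mem_nhds hmem] with t ht
  exact hyeq t (Set.mem_Icc_of_Ioo ht)

variable {W : Type*} [NormedAddCommGroup W] [InnerProductSpace ℝ W] [CompleteSpace W]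

theorem jointHasFDeriv (E Et : ℝ → W → ℝ) (DqE : ℝ → W → W)
    (contEt : Continuous fun p : ℝ × W => Et p.1 p.2)
    (hasDerivT : ∀ t q, HasDerivAt (fun τ => E τ q) (Et t q) t)
    (hasGrad : ∀ t q, HasGradientAt (fun x => E t x) (DqE t q) q)
    (t : ℝ) (q : W) :
    HasFDerivAt (fun p : ℝ × W => E p.1 p.2)
      ((Et t q) • (ContinuousLinearMap.fst ℝ ℝ W) +
        (innerSL ℝ (DqE t q)).comp (ContinuousLinearMap.snd ℝ ℝ W)) (t, q) := by
  rw [hasFDerivAt_iff_isLittleO_nhds_zero]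
  have hB : (fun h : ℝ × W => E t (q + h.2) - E t q - (inner ℝ (DqE t q) h.2 : ℝ))
      =o[𝓝 0] fun h : ℝ × W => h := by
    have h1 := (hasGrad t q).hasFDerivAt
    rw [hasFDerivAt_iff_isLittleO_nhds_zero] at h1
    have h2 : Tendsto (fun h : ℝ × W => h.2) (𝓝 0) (𝓝 0) := continuous_snd.tendsto' 0 0 rfl
    have h3 := h1.comp_tendsto h2
    simp only [Function.comp_def] at h3
    refine (h3.congr' ?_ (EventuallyEq.refl _ _)).trans_isBigO
      (Asymptotics.isBigO_of_le _ fun h => norm_snd_le h)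
    filter_upwards with h
    simp [InnerProductSpace.toDual_apply_apply]
  have hA : (fun h : ℝ × W => E (t + h.1) (q + h.2) - E t (q + h.2) - Et t q * h.1)
      =o[𝓝 0] fun h : ℝ × W => h := by
    rw [Asymptotics.isLittleO_iff]
    intro c hc
    obtain ⟨δ, hδ, hδ2⟩ := Metric.continuousAt_iff.1 contEt.continuousAt c hc
    filter_upwards [Metric.ball_mem_nhds (0 : ℝ × W) hδ] with h hh
    have hn : ‖h‖ < δ := by simpa [Metric.mem_ball, dist_zero_right] using hh
    have hcont : ∀ p : W, Continuous fun r => Et r p := fun p =>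
      contEt.comp (continuous_id.prodMk continuous_const)
    have heq : E (t + h.1) (q + h.2) - E t (q + h.2)
        = ∫ r in t..(t + h.1), Et r (q + h.2) :=
      (intervalIntegral.integral_eq_sub_of_hasDerivAt
        (fun r _ => hasDerivT r (q + h.2))
        ((hcont (q + h.2)).intervalIntegrable _ _)).symm
    have hconst : Et t q * h.1 = ∫ _ in t..(t + h.1), Et t q := by
      rw [intervalIntegral.integral_const]; simp [mul_comm]
    rw [heq, hconst, ← intervalIntegral.integral_sub
      ((hcont (q + h.2)).intervalIntegrable _ _) intervalIntegrable_const]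
    have hb : ∀ r ∈ Set.uIoc t (t + h.1), ‖Et r (q + h.2) - Et t q‖ ≤ c := by
      intro r hr
      have hr1 : |r - t| ≤ |h.1| := by
        rcases Set.mem_uIoc.1 hr with h' | h' <;>
          · rw [abs_le]; constructor <;>
              nlinarith [abs_nonneg h.1, le_abs_self h.1, neg_abs_le h.1]
      have hd : dist ((r, q + h.2) : ℝ × W) (t, q) < δ := by
        rw [Prod.dist_eq]
        have h1 : dist r t < δ := by
          rw [Real.dist_eq]
          calc |r - t| ≤ |h.1| := hr1
            _ ≤ ‖h‖ := by simpa using norm_fst_le h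
            _ < δ := hn
        have h2 : dist (q + h.2) q < δ := by
          rw [dist_eq_norm]
          calc ‖q + h.2 - q‖ = ‖h.2‖ := by rw [add_sub_cancel_left]
            _ ≤ ‖h‖ := norm_snd_le h
            _ < δ := hn
        exact max_lt h1 h2
      exact le_of_lt (hδ2 hd)
    calc ‖∫ r in t..(t + h.1), (Et r (q + h.2) - Et t q)‖
        ≤ c * |t + h.1 - t| := intervalIntegral.norm_integral_le_of_norm_le_const hb
      _ ≤ c * ‖h‖ := by
          rw [add_sub_cancel_left]
          exact mul_le_mul_of_nonneg_left (by simpa using norm_fst_le h) hc.le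
  have := hA.add hB
  refine this.congr' (by filter_upwards with h; simp; ring) (EventuallyEq.refl _ _)

theorem hasDerivAt_energy_comp (E Et : ℝ → W → ℝ) (DqE : ℝ → W → W)
    (contEt : Continuous fun p : ℝ × W => Et p.1 p.2)
    (hasDerivT : ∀ t q, HasDerivAt (fun τ => E τ q) (Et t q) t)
    (hasGrad : ∀ t q, HasGradientAt (fun x => E t x) (DqE t q) q)
    {th : ℝ → ℝ} {qh : ℝ → W} {a : ℝ} {b : W} {s : ℝ}
    (hth : HasDerivAt th a s) (hqh : HasDerivAt qh b s) :
    HasDerivAt (fun r => E (th r) (qh r))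
      (Et (th s) (qh s) * a + (inner ℝ (DqE (th s) (qh s)) b : ℝ)) s := by
  have hF := jointHasFDeriv E Et DqE contEt hasDerivT hasGrad (th s) (qh s)
  have h2 := hF.comp_hasDerivAt s (hth.prodMk hqh)
  simp at h2
  exact h2

theorem subdiff_norm_iff {R1 : W → W → ℝ} (hR : IsFinsler R1) (q v' w : W) :
    w ∈ subdiff (fun v => R1 q v) v' ↔
      (∀ u, (inner ℝ w u : ℝ) ≤ R1 q u) ∧ (inner ℝ w v' : ℝ) = R1 q v' := by
  constructor
  · intro h
    have h2 : (inner ℝ w v' : ℝ) ≤ R1 q v' := by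
      have := h ((2:ℝ) • v')
      dsimp only at this
      rw [hR.smul] at this
      have h2v : (inner ℝ w ((2:ℝ) • v' - v') : ℝ) = (inner ℝ w v' : ℝ) := by
        congr 1
        rw [two_smul]; abel
      rw [h2v] at this
      norm_num at this
      linarith
    have h3 : R1 q v' ≤ (inner ℝ w v' : ℝ) := by
      have := h 0
      dsimp only at this
      rw [zero_sub, inner_neg_right] at this
      have h0 : R1 q (0 : W) = 0 := (hR.eq_zero_iff q 0).2 rfl
      rw [h0] at this
      linarith
    have heq := le_antisymm h2 h3
    refine ⟨fun u => ?_, heq⟩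
    have := h u
    dsimp only at this
    rw [inner_sub_right, heq] at this
    linarith
  · rintro ⟨h1, h2⟩ u
    dsimp only
    rw [inner_sub_right, h2]
    have := h1 u
    linarith

end AuxLemmas

section EucAux

open MeasureTheory Filter Set Function
open scoped Topology ENNReal RealInnerProductSpace

variable {d : ℕ}

theorem normLB {R1 : EuclideanSpace ℝ (Fin d) → EuclideanSpace ℝ (Fin d) → ℝ}
    (hR : IsFinsler R1) (q : EuclideanSpace ℝ (Fin d)) :
    ∃ c : ℝ, 0 < c ∧ ∀ v, c * ‖v‖ ≤ R1 q v := by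
  have hcont : Continuous fun v => R1 q v :=
    hR.cont.comp (continuous_const.prodMk continuous_id)
  rcases subsingleton_or_nontrivial (EuclideanSpace ℝ (Fin d)) with hsub | hnt
  · exact ⟨1, one_pos, fun v => by
      rw [Subsingleton.elim v 0]; simp [hR.nonneg q 0]⟩
  · have hne : (Metric.sphere (0 : EuclideanSpace ℝ (Fin d)) 1).Nonempty :=
      NormedSpace.sphere_nonempty.2 zero_le_one
    obtain ⟨v₀, hv₀mem, hmin'⟩ :=
      (isCompact_sphere (0 : EuclideanSpace ℝ (Fin d)) 1).exists_isMinOn hne hcont.continuousOn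
    have hmin : ∀ u ∈ Metric.sphere (0 : EuclideanSpace ℝ (Fin d)) 1, R1 q v₀ ≤ R1 q u :=
      fun u hu => hmin' hu
    have hv₀ : ‖v₀‖ = 1 := by simpa using hv₀mem
    have hv₀ne : v₀ ≠ 0 := by intro h; rw [h] at hv₀; simp at hv₀
    have hc : 0 < R1 q v₀ :=
      lt_of_le_of_ne (hR.nonneg q v₀) fun h => hv₀ne ((hR.eq_zero_iff q v₀).1 h.symm)
    refine ⟨R1 q v₀, hc, fun v => ?_⟩
    rcases eq_or_ne v 0 with rfl | hv
    · simp [(hR.eq_zero_iff q (0 : EuclideanSpace ℝ (Fin d))).2 rfl]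
    · have hvn : (0:ℝ) < ‖v‖ := norm_pos_iff.2 hv
      have hmem : ‖v‖⁻¹ • v ∈ Metric.sphere (0 : EuclideanSpace ℝ (Fin d)) 1 := by
        simp [norm_smul, abs_of_pos (inv_pos.2 hvn), inv_mul_cancel₀ hvn.ne']
      have h1 := hmin _ hmem
      rw [hR.smul, abs_of_pos (inv_pos.2 hvn)] at h1
      nlinarith [mul_le_mul_of_nonneg_right h1 hvn.le, inv_mul_cancel₀ hvn.ne',
        hR.nonneg q v]

theorem R1_pos {R1 : EuclideanSpace ℝ (Fin d) → EuclideanSpace ℝ (Fin d) → ℝ}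
    (hR : IsFinsler R1) (q : EuclideanSpace ℝ (Fin d)) {v : EuclideanSpace ℝ (Fin d)}
    (hv : v ≠ 0) : 0 < R1 q v :=
  lt_of_le_of_ne (hR.nonneg q v) fun h => hv ((hR.eq_zero_iff q v).1 h.symm)

theorem R1_neg {R1 : EuclideanSpace ℝ (Fin d) → EuclideanSpace ℝ (Fin d) → ℝ}
    (hR : IsFinsler R1) (q v : EuclideanSpace ℝ (Fin d)) : R1 q (-v) = R1 q v := by
  have := hR.smul q (-1) v
  simpa using this

theorem localSlope_ub {R1 : EuclideanSpace ℝ (Fin d) → EuclideanSpace ℝ (Fin d) → ℝ}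
    (hR : IsFinsler R1) (DqE : ℝ → EuclideanSpace ℝ (Fin d) → EuclideanSpace ℝ (Fin d))
    (t : ℝ) (q : EuclideanSpace ℝ (Fin d)) :
    ∀ v : EuclideanSpace ℝ (Fin d), v ≠ 0 →
      (inner ℝ (DqE t q) v : ℝ) ≤ localSlope R1 DqE t q * R1 q v := by
  intro v hv
  obtain ⟨c, hc, hcb⟩ := normLB hR q
  have hbdd : BddAbove {r | ∃ v : EuclideanSpace ℝ (Fin d), v ≠ 0 ∧
      r = (inner ℝ (DqE t q) v : ℝ) / R1 q v} := by
    refine ⟨‖DqE t q‖ / c, ?_⟩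
    rintro r ⟨u, hu, rfl⟩
    have hpos := R1_pos hR q hu
    rw [div_le_div_iff₀ hpos hc]
    nlinarith [real_inner_le_norm (DqE t q) u, hcb u, norm_nonneg u,
      norm_nonneg (DqE t q), mul_le_mul_of_nonneg_left (hcb u) (norm_nonneg (DqE t q)),
      mul_le_mul_of_nonneg_right (real_inner_le_norm (DqE t q) u) hc.le]
  have hmem : (inner ℝ (DqE t q) v : ℝ) / R1 q v ∈ {r | ∃ v : EuclideanSpace ℝ (Fin d), v ≠ 0 ∧
      r = (inner ℝ (DqE t q) v : ℝ) / R1 q v} := ⟨v, hv, rfl⟩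
  have := le_csSup hbdd hmem
  rw [div_le_iff₀ (R1_pos hR q hv)] at this
  calc (inner ℝ (DqE t q) v : ℝ)
      ≤ sSup {r | ∃ v : EuclideanSpace ℝ (Fin d), v ≠ 0 ∧
          r = (inner ℝ (DqE t q) v : ℝ) / R1 q v} * R1 q v := this
    _ = localSlope R1 DqE t q * R1 q v := rfl

theorem localSlope_le {R1 : EuclideanSpace ℝ (Fin d) → EuclideanSpace ℝ (Fin d) → ℝ}
    (hR : IsFinsler R1) {DqE : ℝ → EuclideanSpace ℝ (Fin d) → EuclideanSpace ℝ (Fin d)}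
    {t : ℝ} {q : EuclideanSpace ℝ (Fin d)} {a : ℝ} (ha : 0 ≤ a)
    (h : ∀ v : EuclideanSpace ℝ (Fin d), v ≠ 0 → (inner ℝ (DqE t q) v : ℝ) ≤ a * R1 q v) :
    localSlope R1 DqE t q ≤ a := by
  refine Real.sSup_le ?_ ha
  rintro r ⟨v, hv, rfl⟩
  rw [div_le_iff₀ (R1_pos hR q hv)]
  exact h v hv

end EucAux


variable {d : ℕ}

theorem statement7 (T s₀ s₁ : ℝ) (hT : 0 < T) (hs : s₀ < s₁)
    (R1 : EuclideanSpace ℝ (Fin d) → EuclideanSpace ℝ (Fin d) → ℝ)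
    (hR : IsFinsler R1) (hcomp : IsCompleteD (finslerDist R1))
    (E Et : ℝ → EuclideanSpace ℝ (Fin d) → ℝ)
    (DqE : ℝ → EuclideanSpace ℝ (Fin d) → EuclideanSpace ℝ (Fin d))
    (hE : IsC1Energy E Et DqE)
    (th th' : ℝ → ℝ) (qh qh' : ℝ → EuclideanSpace ℝ (Fin d))
    (hACt : IsACOn s₀ s₁ th th') (hACq : IsACOn s₀ s₁ qh qh')
    (hmap : ∀ s ∈ Set.Icc s₀ s₁, th s ∈ Set.Icc 0 T) :
    IsParamSol R1 E Et DqE T s₀ s₁ th th' qh qh' ↔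
      ∃ lam : ℝ → ℝ, (∀ s ∈ Set.Ioo s₀ s₁, 1 ≤ lam s) ∧
        ∀ᵐ s ∂volume, s ∈ Set.Ioo s₀ s₁ →
          ((∃ w ∈ subdiff (fun v => R1 (qh s) v) (qh' s),
              lam s • w + DqE (th s) (qh s) = 0) ∧
           0 ≤ th' s ∧ 1 ≤ lam s ∧ (lam s - 1) * th' s = 0 ∧
           0 < th' s + R1 (qh s) (qh' s)) := by
  have hsle := hs.le
  have haeT := hACt.ae_hasDerivAt hsle
  have haeQ := hACq.ae_hasDerivAt hsle
  constructor
  · -- forward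
    intro hP
    refine ⟨fun s => max (localSlope R1 DqE (th s) (qh s)) 1,
      fun s _ => le_max_right _ _, ?_⟩
    filter_upwards [haeT, haeQ, hP.nondeg, hP.evi] with s hT1 hQ1 hnd hevi hmem
    have hT' := hT1 hmem
    have hQ' := hQ1 hmem
    have hnd' := hnd hmem
    have hevi' := hevi hmem
    have hlam1 : (1:ℝ) ≤ max (localSlope R1 DqE (th s) (qh s)) 1 := le_max_right _ _
    have hlampos : (0:ℝ) < max (localSlope R1 DqE (th s) (qh s)) 1 :=
      lt_of_lt_of_le one_pos hlam1
    have hchain := hasDerivAt_energy_comp E Et DqE hE.contEt hE.hasDerivT hE.hasGrad hT' hQ'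
    have hderiv := hchain.deriv
    -- nonnegativity of th'
    have hth0 : 0 ≤ th' s := by
      have h1 : Filter.Tendsto (slope th s) (𝓝[>] s) (𝓝 (th' s)) :=
        (hasDerivAt_iff_tendsto_slope.1 hT').mono_left
          (nhdsWithin_mono s fun y hy => Set.mem_compl_singleton_iff.2 (ne_of_gt hy))
      refine ge_of_tendsto h1 ?_
      filter_upwards [Ioo_mem_nhdsGT_of_mem (Set.mem_Ico.2 ⟨le_refl s, hmem.2⟩)] with y hy
      have hmono := hP.mono (Set.mem_Icc_of_Ioo hmem)
        (Set.mem_Icc.2 ⟨(hmem.1.trans hy.1).le, hy.2.le⟩) hy.1.le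
      rw [slope_def_field]
      exact div_nonneg (by linarith) (by linarith [hy.1])
    -- key inequality
    have hkey : (inner ℝ (DqE (th s) (qh s)) (qh' s) : ℝ)
          ≤ -(R1 (qh s) (qh' s) * max (localSlope R1 DqE (th s) (qh s)) 1) ∧
        (max (localSlope R1 DqE (th s) (qh s)) 1 - 1) * th' s = 0 := by
      rcases eq_or_lt_of_le hth0 with h0 | h0
      · have hM : M0 (th' s) (R1 (qh s) (qh' s)) (localSlope R1 DqE (th s) (qh s))
            = ((R1 (qh s) (qh' s) + R1 (qh s) (qh' s)
                * max (localSlope R1 DqE (th s) (qh s) - 1) 0 : ℝ) : EReal) := by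
          simp [M0, ← h0]
        rw [hM, hderiv, ← EReal.coe_neg, EReal.coe_le_coe_iff] at hevi'
        have hmax : R1 (qh s) (qh' s) + R1 (qh s) (qh' s)
              * max (localSlope R1 DqE (th s) (qh s) - 1) 0
            = R1 (qh s) (qh' s) * max (localSlope R1 DqE (th s) (qh s)) 1 := by
          rcases le_total (localSlope R1 DqE (th s) (qh s)) 1 with h | h
          · rw [max_eq_right h, max_eq_right (by linarith : localSlope R1 DqE (th s) (qh s) - 1 ≤ 0)]
            ring
          · rw [max_eq_left h, max_eq_left (by linarith : (0:ℝ) ≤ localSlope R1 DqE (th s) (qh s) - 1)]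
            ring
        rw [hmax] at hevi'
        refine ⟨by rw [← h0] at hevi'; linarith, by rw [← h0]; ring⟩
      · have hxi1 : localSlope R1 DqE (th s) (qh s) ≤ 1 := by
          by_contra hc
          have hMtop : M0 (th' s) (R1 (qh s) (qh' s)) (localSlope R1 DqE (th s) (qh s)) = ⊤ := by
            simp [M0, h0.ne', hc]
          rw [hMtop, EReal.neg_top, le_bot_iff] at hevi'
          exact (EReal.coe_ne_bot _) hevi'
        have hM : M0 (th' s) (R1 (qh s) (qh' s)) (localSlope R1 DqE (th s) (qh s))
            = ((R1 (qh s) (qh' s) : ℝ) : EReal) := by simp [M0, h0.ne', hxi1]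
        rw [hM, hderiv, ← EReal.coe_neg, EReal.coe_le_coe_iff] at hevi'
        have hlameq : max (localSlope R1 DqE (th s) (qh s)) 1 = 1 := max_eq_right hxi1
        exact ⟨by rw [hlameq]; linarith, by rw [hlameq]; ring⟩
    -- build w
    have hub : ∀ u : EuclideanSpace ℝ (Fin d),
        (inner ℝ (-((max (localSlope R1 DqE (th s) (qh s)) 1)⁻¹ • DqE (th s) (qh s))) u : ℝ)
          ≤ R1 (qh s) u := by
      intro u
      rw [inner_neg_left, real_inner_smul_left]
      rcases eq_or_ne u 0 with rfl | hu
      · simp [(hR.eq_zero_iff (qh s) (0 : EuclideanSpace ℝ (Fin d))).2 rfl]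
      · have h1 := localSlope_ub hR DqE (th s) (qh s) (-u) (neg_ne_zero.2 hu)
        rw [inner_neg_right, R1_neg hR] at h1
        have h2 : -(inner ℝ (DqE (th s) (qh s)) u : ℝ)
            ≤ max (localSlope R1 DqE (th s) (qh s)) 1 * R1 (qh s) u :=
          h1.trans (mul_le_mul_of_nonneg_right (le_max_left _ _) (hR.nonneg _ _))
        have h3 := mul_le_mul_of_nonneg_left h2 (inv_nonneg.2 hlampos.le)
        rw [← mul_assoc, inv_mul_cancel₀ hlampos.ne', one_mul] at h3
        linarith
    have hrw : (inner ℝ (-((max (localSlope R1 DqE (th s) (qh s)) 1)⁻¹ • DqE (th s) (qh s)))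
        (qh' s) : ℝ)
        = -((max (localSlope R1 DqE (th s) (qh s)) 1)⁻¹
            * (inner ℝ (DqE (th s) (qh s)) (qh' s) : ℝ)) := by
      rw [inner_neg_left, real_inner_smul_left]
    have heqq : (inner ℝ (-((max (localSlope R1 DqE (th s) (qh s)) 1)⁻¹ • DqE (th s) (qh s)))
        (qh' s) : ℝ) = R1 (qh s) (qh' s) := by
      refine le_antisymm (hub (qh' s)) ?_
      rw [hrw]
      have h2 := hkey.1
      have h3 := mul_le_mul_of_nonneg_left h2 (inv_nonneg.2 hlampos.le)
      have h4 : (max (localSlope R1 DqE (th s) (qh s)) 1)⁻¹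
          * (R1 (qh s) (qh' s) * max (localSlope R1 DqE (th s) (qh s)) 1)
          = R1 (qh s) (qh' s) := by
        rw [mul_comm (R1 (qh s) (qh' s)), ← mul_assoc, inv_mul_cancel₀ hlampos.ne', one_mul]
      rw [mul_neg] at h3
      rw [h4] at h3
      linarith
    refine ⟨⟨-((max (localSlope R1 DqE (th s) (qh s)) 1)⁻¹ • DqE (th s) (qh s)),
      (subdiff_norm_iff hR _ _ _).2 ⟨hub, heqq⟩, ?_⟩, hth0, le_max_right _ _, hkey.2, hnd'⟩
    rw [smul_neg, smul_smul, mul_inv_cancel₀ hlampos.ne', one_smul, neg_add_cancel]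
  · -- reverse
    rintro ⟨lam, hlam, hae⟩
    have hth'nn : ∀ᵐ u ∂volume, u ∈ Set.Ioo s₀ s₁ → 0 ≤ th' u :=
      hae.mono fun u hu hmem => (hu hmem).2.1
    have h00 : ∀ᵐ u : ℝ ∂volume, u ≠ s₀ := by
      rw [ae_iff]
      simp only [not_not, Set.setOf_eq_eq_singleton]
      exact measure_singleton s₀
    have h11 : ∀ᵐ u : ℝ ∂volume, u ≠ s₁ := by
      rw [ae_iff]
      simp only [not_not, Set.setOf_eq_eq_singleton]
      exact measure_singleton s₁
    have hsubint : ∀ u ∈ Set.Icc s₀ s₁, IntervalIntegrable th' volume s₀ u := fun u hu =>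
      hACt.intg.mono_set (Set.uIcc_subset_uIcc Set.left_mem_uIcc
        (by rw [Set.uIcc_of_le hsle]; exact hu))
    have hmono : MonotoneOn th (Set.Icc s₀ s₁) := by
      intro a ha b hb hab
      have hdiff : th b - th a = ∫ u in a..b, th' u := by
        rw [hACt.eq a ha, hACt.eq b hb, add_sub_add_left_eq_sub]
        exact intervalIntegral.integral_interval_sub_left (hsubint b hb) (hsubint a ha)
      have hnn : 0 ≤ ∫ u in a..b, th' u := by
        apply intervalIntegral.integral_nonneg_of_ae_restrict hab
        rw [Filter.EventuallyLE, MeasureTheory.ae_restrict_iff' measurableSet_Icc]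
        filter_upwards [hth'nn, h00, h11] with u hu hu0 hu1 humem
        have : u ∈ Set.Ioo s₀ s₁ := ⟨lt_of_le_of_ne (ha.1.trans humem.1) (Ne.symm hu0),
          lt_of_le_of_ne (humem.2.trans hb.2) hu1⟩
        simpa using hu this
      linarith
    refine ⟨hACt, hACq, hmap, hmono, hae.mono fun u hu hmem => (hu hmem).2.2.2.2, ?_⟩
    filter_upwards [haeT, haeQ, hae] with s hT1 hQ1 hh hmem
    obtain ⟨⟨w, hw, heqw⟩, hth'nn2, hlam1, hcompl, hnd'⟩ := hh hmem
    obtain ⟨hw1, hw2⟩ := (subdiff_norm_iff hR _ _ _).1 hw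
    have hlampos : (0:ℝ) < lam s := lt_of_lt_of_le one_pos hlam1
    have hchain := hasDerivAt_energy_comp E Et DqE hE.contEt hE.hasDerivT hE.hasGrad
      (hT1 hmem) (hQ1 hmem)
    have hg : DqE (th s) (qh s) = -(lam s • w) := eq_neg_of_add_eq_zero_right heqw
    have hinner : (inner ℝ (DqE (th s) (qh s)) (qh' s) : ℝ) = -(lam s * R1 (qh s) (qh' s)) := by
      rw [hg, inner_neg_left, real_inner_smul_left, hw2]
    have hxilam : localSlope R1 DqE (th s) (qh s) ≤ lam s := by
      refine localSlope_le hR (by linarith) fun v hv => ?_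
      rw [hg, inner_neg_left, real_inner_smul_left]
      have h1 := hw1 (-v)
      rw [inner_neg_right, R1_neg hR] at h1
      nlinarith [hR.nonneg (qh s) v]
    rw [hchain.deriv]
    rcases eq_or_ne (th' s) 0 with h0 | h0
    · have hM : M0 (th' s) (R1 (qh s) (qh' s)) (localSlope R1 DqE (th s) (qh s))
          = ((R1 (qh s) (qh' s) + R1 (qh s) (qh' s)
              * max (localSlope R1 DqE (th s) (qh s) - 1) 0 : ℝ) : EReal) := by
        simp [M0, h0]
      rw [hM, ← EReal.coe_neg, EReal.coe_le_coe_iff]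
      have hmax : R1 (qh s) (qh' s) + R1 (qh s) (qh' s)
            * max (localSlope R1 DqE (th s) (qh s) - 1) 0
          ≤ lam s * R1 (qh s) (qh' s) := by
        have hnn := hR.nonneg (qh s) (qh' s)
        rcases le_total (localSlope R1 DqE (th s) (qh s)) 1 with h | h
        · rw [max_eq_right (by linarith : localSlope R1 DqE (th s) (qh s) - 1 ≤ 0)]
          nlinarith
        · rw [max_eq_left (by linarith : (0:ℝ) ≤ localSlope R1 DqE (th s) (qh s) - 1)]
          nlinarith
      rw [hinner, h0]
      linarith
    · have hlameq : lam s = 1 := by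
        rcases mul_eq_zero.1 hcompl with h | h
        · linarith
        · exact absurd h h0
      have hxi1 : localSlope R1 DqE (th s) (qh s) ≤ 1 := hlameq ▸ hxilam
      have hM : M0 (th' s) (R1 (qh s) (qh' s)) (localSlope R1 DqE (th s) (qh s))
          = ((R1 (qh s) (qh' s) : ℝ) : EReal) := by simp [M0, h0, hxi1]
      rw [hM, ← EReal.coe_neg, EReal.coe_le_coe_iff, hinner, hlameq]
      linarith
end

section
/- Let (X,d) be a metric space and F : X → ℝ ∪ {+∞} be convex on (X,d) in the following sense: for all q₀, q₁ in the domain of F and all θ ∈ [0,1] there exists q_θ ∈ X with d(q₀,q_θ) = θ d(q₀,q₁), d(q_θ,q₁) = (1−θ) d(q₀,q₁), and F(q_θ) ≤ (1−θ) F(q₀) + θ F(q₁). Then for every q with F(q) < ∞ the global slope equals the local slope: sup_{q̃ ≠ q} (F(q) − F(q̃))⁺ / d(q,q̃) = limsup_{v → q} (F(q) − F(v))⁺ / d(q,v), where (·)⁺ denotes the positive part (both sides are allowed to equal +∞). -/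
open MeasureTheory Filter Set Function
open scoped Topology ENNReal RealInnerProductSpace

/-- Positive part of an extended real, as an extended nonnegative real. -/
noncomputable def posPartE (x : EReal) : ℝ≥0∞ :=
  if x = ⊤ then ⊤ else ENNReal.ofReal x.toReal

lemma posPartE_coe (r : ℝ) : posPartE (r : EReal) = ENNReal.ofReal r := by
  simp [posPartE]

theorem statement19 {X : Type*} [MetricSpace X] (F : X → EReal)
    (hF : ∀ x, F x ≠ ⊥)
    (hconv : ∀ q₀ q₁ : X, F q₀ ≠ ⊤ → F q₁ ≠ ⊤ → ∀ θ ∈ Set.Icc (0:ℝ) 1,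
      ∃ qθ : X, dist q₀ qθ = θ * dist q₀ q₁ ∧ dist qθ q₁ = (1 - θ) * dist q₀ q₁ ∧
        F qθ ≤ ((1 - θ : ℝ) : EReal) * F q₀ + ((θ : ℝ) : EReal) * F q₁)
    (q : X) (hq : F q ≠ ⊤) :
    (⨆ (v : X) (_ : v ≠ q), posPartE (F q - F v) / ENNReal.ofReal (dist q v))
      = Filter.limsup (fun v => posPartE (F q - F v) / ENNReal.ofReal (dist q v))
          (𝓝[≠] q) := by
  set f : X → ℝ≥0∞ := fun v => posPartE (F q - F v) / ENNReal.ofReal (dist q v) with hf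
  set fq : ℝ := (F q).toReal with hfq
  have hFq : F q = (fq : EReal) := (EReal.coe_toReal hq (hF q)).symm
  apply le_antisymm
  · -- sup ≤ limsup
    apply iSup₂_le
    intro v hv
    rw [Filter.limsup_eq]
    apply le_sInf
    intro a ha
    rcases eq_or_ne (posPartE (F q - F v)) 0 with h0 | h0
    · simp [f, h0]
    have hFv : F v ≠ ⊤ := by
      intro ht
      apply h0
      rw [ht, hFq, show ((fq : EReal) - ⊤ : EReal) = ⊥ from rfl]
      simp [posPartE]
    set fv : ℝ := (F v).toReal with hfv
    have hFv' : F v = (fv : EReal) := (EReal.coe_toReal hFv (hF v)).symm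
    have hsub : F q - F v = ((fq - fv : ℝ) : EReal) := by
      rw [hFq, hFv', EReal.coe_sub]
    have hc : 0 < fq - fv := by
      by_contra h
      push_neg at h
      apply h0
      rw [hsub, posPartE_coe, ENNReal.ofReal_eq_zero]
      linarith
    set c : ℝ := fq - fv with hcdef
    set D : ℝ := dist q v with hD
    have hDpos : 0 < D := dist_pos.mpr (Ne.symm hv)
    rw [hsub, posPartE_coe, ← ENNReal.ofReal_div_of_pos hDpos]
    -- extract a ball from the eventual bound
    simp only [Set.mem_setOf_eq] at ha
    rw [eventually_nhdsWithin_iff, Metric.eventually_nhds_iff] at ha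
    obtain ⟨δ, hδ, hball⟩ := ha
    -- pick θ
    set θ : ℝ := min 1 (δ / (2 * D)) with hθdef
    have hθpos : 0 < θ := lt_min one_pos (by positivity)
    have hθ1 : θ ≤ 1 := min_le_left _ _
    have hθD : θ * D < δ := by
      have h1 : θ ≤ δ / (2 * D) := min_le_right _ _
      have h2 : δ / (2 * D) * D = δ / 2 := by field_simp
      have : θ * D ≤ δ / 2 := by
        nlinarith [mul_le_mul_of_nonneg_right h1 hDpos.le]
      linarith
    obtain ⟨qθ, hd1, hd2, hle⟩ := hconv q v hq hFv θ ⟨le_of_lt hθpos, hθ1⟩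
    have hdqθ : dist q qθ = θ * D := hd1
    have hqθne : qθ ≠ q := by
      intro h
      rw [h, dist_self] at hdqθ
      nlinarith
    have hfa : f qθ ≤ a := by
      apply hball ?_ hqθne
      rw [dist_comm, hdqθ]; exact hθD
    refine le_trans ?_ hfa
    -- F qθ is finite and bounded
    have hrhs : ((1 - θ : ℝ) : EReal) * F q + ((θ : ℝ) : EReal) * F v
        = (((1 - θ) * fq + θ * fv : ℝ) : EReal) := by
      rw [hFq, hFv']
      push_cast
      rfl
    rw [hrhs] at hle
    have hqθtop : F qθ ≠ ⊤ := by
      intro h; rw [h] at hle; exact (EReal.coe_lt_top _).not_ge hle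
    set fθ : ℝ := (F qθ).toReal with hfθ
    have hFqθ : F qθ = (fθ : EReal) := (EReal.coe_toReal hqθtop (hF qθ)).symm
    rw [hFqθ, EReal.coe_le_coe_iff] at hle
    have hnum : θ * c ≤ fq - fθ := by
      simp only [hcdef]; nlinarith
    have hkey : ENNReal.ofReal (θ * c) / ENNReal.ofReal (θ * D) ≤ f qθ := by
      simp only [f, hFq, hFqθ, ← EReal.coe_sub, posPartE_coe, hdqθ]
      exact ENNReal.div_le_div (ENNReal.ofReal_le_ofReal hnum) le_rfl
    refine le_trans ?_ hkey
    rw [← ENNReal.ofReal_div_of_pos (by positivity : (0:ℝ) < θ * D),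
      mul_div_mul_left c D (ne_of_gt hθpos)]
  · rw [Filter.limsup_eq]
    apply sInf_le
    filter_upwards [self_mem_nhdsWithin] with x hx
    exact le_iSup₂_of_le x hx le_rfl
end
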